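/- arXiv:0904.2937 — 3 statements merged into one kernel-verified Lean document; each statement's English description precedes it below -/
import Mathlib

section
/- Let K be an algebraically closed field of characteristic 0, and let q = X₀² + X₁² + X₂² in the polynomial ring K[X₀, X₁, X₂]. Then the quotient K-algebras K[X₀, X₁, X₂]/(q) and K[X₀, X₁, X₂]/(q − 1) are not isomorphic as K-algebras. -/
open MvPolynomial TrivSqZeroExt

section aux
variable {K : Type*} [Field K] [CharZero K]

omit [CharZero K] in
lemma cone_surj (q : MvPolynomial (Fin 3) K) (hq : q = X 0 ^ 2 + X 1 ^ 2 + X 2 ^ 2) :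
    ∃ f : (MvPolynomial (Fin 3) K ⧸ Ideal.span {q}) →ₐ[K] TrivSqZeroExt K (Fin 3 → K),
      Function.Surjective f := by
  set g : Fin 3 → TrivSqZeroExt K (Fin 3 → K) := fun i => inr (Pi.single i 1) with hg
  have hgq : aeval g q = 0 := by
    subst hq; simp [hg, sq, inr_mul_inr]
  have hker : ∀ a ∈ Ideal.span {q}, aeval g a = 0 := by
    intro a ha
    obtain ⟨b, rfl⟩ := Ideal.mem_span_singleton'.mp ha
    rw [map_mul, hgq, mul_zero]
  refine ⟨Ideal.Quotient.liftₐ _ (aeval g) hker, ?_⟩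
  have hs : Function.Surjective (aeval g : MvPolynomial (Fin 3) K →ₐ[K] _) := by
    intro x
    refine ⟨C x.fst + ∑ i, C (x.snd i) * X i, ?_⟩
    have h1 : ∀ i, (inl (x.snd i) : TrivSqZeroExt K (Fin 3 → K)) * g i
        = inr (Pi.single i (x.snd i)) := by
      intro i
      rw [hg, inl_mul_inr]
      congr 1
      funext j
      simp [Pi.single_apply]
    simp only [map_add, map_sum, map_mul, aeval_X, aeval_C, algebraMap_eq_inl, h1, ← inr_sum,
      Finset.univ_sum_single]
    exact inl_fst_add_inr_snd_eq x
  intro x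
  obtain ⟨p, hp⟩ := hs x
  exact ⟨Ideal.Quotient.mk _ p, by rw [Ideal.Quotient.liftₐ_apply]; exact hp⟩

lemma smooth_no_surj (q : MvPolynomial (Fin 3) K) (hq : q = X 0 ^ 2 + X 1 ^ 2 + X 2 ^ 2)
    (f : (MvPolynomial (Fin 3) K ⧸ Ideal.span {q - 1}) →ₐ[K] TrivSqZeroExt K (Fin 3 → K)) :
    ¬ Function.Surjective f := by
  intro hf
  set F : MvPolynomial (Fin 3) K →ₐ[K] TrivSqZeroExt K (Fin 3 → K) :=
    f.comp (Ideal.Quotient.mkₐ K _) with hF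
  have hFs : Function.Surjective F := hf.comp Ideal.Quotient.mk_surjective
  have hFq : F q = 1 := by
    have h0 : F (q - 1) = 0 := by
      rw [hF]
      simp only [AlgHom.comp_apply, Ideal.Quotient.mkₐ_eq_mk]
      have hz : (Ideal.Quotient.mk (Ideal.span {q - 1})) (q - 1) = 0 :=
        Ideal.Quotient.eq_zero_iff_mem.mpr (Ideal.subset_span rfl)
      rw [hz, map_zero]
    have := sub_eq_zero.mp (by rwa [map_sub, map_one] at h0)
    exact this
  set a : Fin 3 → K := fun i => (F (X i)).fst with ha
  set v : Fin 3 → (Fin 3 → K) := fun i => (F (X i)).snd with hv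
  -- compute F q componentwise
  have hsq : ∀ i : Fin 3, F (X i ^ 2) = (F (X i)) * (F (X i)) := by
    intro i; rw [sq, map_mul]
  have hfst : ∑ i, a i * a i = 1 := by
    have := congrArg TrivSqZeroExt.fst hFq
    rw [hq] at this
    simpa [map_add, hsq, fst_mul, Fin.sum_univ_three] using this
  have hsnd : ∑ i, (a i • v i + a i • v i) = 0 := by
    have := congrArg TrivSqZeroExt.snd hFq
    rw [hq] at this
    simpa [map_add, hsq, snd_mul, op_smul_eq_smul, Fin.sum_univ_three] using this
  have hrel : ∑ i, a i • v i = 0 := by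
    have h2 : (2 : K) • ∑ i, a i • v i = 0 := by
      rw [Finset.smul_sum]
      simpa [two_smul] using hsnd
    have := smul_eq_zero.mp h2
    rcases this with h | h
    · exact absurd h two_ne_zero
    · exact h
  -- spanning
  set W := Submodule.span K (Set.range v) with hW
  let S : Subalgebra K (TrivSqZeroExt K (Fin 3 → K)) :=
    { carrier := {x | x.snd ∈ W}
      mul_mem' := fun {x y} hx hy => by
        simp only [Set.mem_setOf_eq, snd_mul, op_smul_eq_smul] at *
        exact W.add_mem (W.smul_mem _ hy) (W.smul_mem _ hx)
      one_mem' := by simp [Set.mem_setOf_eq, snd_one]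
      add_mem' := fun {x y} hx hy => by
        simp only [Set.mem_setOf_eq, snd_add] at *
        exact W.add_mem hx hy
      zero_mem' := by simp [Set.mem_setOf_eq]
      algebraMap_mem' := fun r => by
        simp [Set.mem_setOf_eq, algebraMap_eq_inl, snd_inl] }
  have key : ∀ p : MvPolynomial (Fin 3) K, F p ∈ S := by
    intro p
    have hmem : F p ∈ (aeval (⇑F ∘ X) : MvPolynomial (Fin 3) K →ₐ[K] _).range :=
      ⟨p, by rw [← aeval_unique]; rfl⟩
    rw [← Algebra.adjoin_range_eq_range_aeval] at hmem
    refine Algebra.adjoin_le ?_ hmem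
    rintro x ⟨i, rfl⟩
    exact Submodule.subset_span ⟨i, rfl⟩
  have hspan : ⊤ ≤ W := by
    intro w _
    obtain ⟨p, hp⟩ := hFs (inr w)
    have := key p
    rw [hp] at this
    exact this
  have hli : LinearIndependent K v :=
    linearIndependent_of_top_le_span_of_card_eq_finrank hspan (by simp [Module.finrank_pi])
  have := Fintype.linearIndependent_iff.mp hli a hrel
  rw [Finset.sum_congr rfl (fun i _ => by rw [this i, zero_mul])] at hfst
  simpa using hfst

end aux


/-- Over an algebraically closed field `K` of characteristic 0, with
`q = X₀² + X₁² + X₂²` in `K[X₀, X₁, X₂]`, the quotient algebras `K[X₀,X₁,X₂]/(q)` and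
`K[X₀,X₁,X₂]/(q - 1)` are not isomorphic as `K`-algebras. -/
theorem quadric_cone_not_iso_smooth_quadric
    (K : Type*) [Field K] [IsAlgClosed K] [CharZero K]
    (q : MvPolynomial (Fin 3) K)
    (hq : q = X 0 ^ 2 + X 1 ^ 2 + X 2 ^ 2) :
    ¬ Nonempty
      ((MvPolynomial (Fin 3) K ⧸ Ideal.span {q}) ≃ₐ[K]
        (MvPolynomial (Fin 3) K ⧸ Ideal.span {q - 1})) := by
  rintro ⟨e⟩
  obtain ⟨f, hf⟩ := cone_surj q hq
  exact smooth_no_surj q hq (f.comp e.symm.toAlgHom) (hf.comp e.symm.surjective)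
end

section
/- Let K be an algebraically closed field of characteristic 0 and Λ a finitely generated free abelian group. Let A and B be commutative K-algebras which are integral domains, each Λ-graded with all graded components of K-dimension at most 1. If the support monoids coincide, i.e. { λ ∈ Λ : A_λ ≠ 0 } = { λ ∈ Λ : B_λ ≠ 0 }, then A and B are isomorphic as Λ-graded K-algebras (in particular, there is a K-algebra isomorphism A ≅ B mapping each A_λ onto B_λ). -/
open DirectSum
set_option synthInstance.maxHeartbeats 1000000 in

theorem exists_mult_basis {K Λ A : Type*} [Field K]
    [AddCommGroup Λ] [DecidableEq Λ] [Module.Free ℤ Λ] [Module.Finite ℤ Λ]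
    [CommRing A] [IsDomain A] [Algebra K A]
    (𝒜 : Λ → Submodule K A) [GradedAlgebra 𝒜]
    (hmf : ∀ lam : Λ, Module.rank K (𝒜 lam) ≤ 1)
    (F : Type*) [Field F] [Algebra A F] (hι : Function.Injective (algebraMap A F)) :
    ∃ a : Λ → A, a 0 = 1 ∧ (∀ lam, 𝒜 lam = Submodule.span K {a lam}) ∧
      ∀ lam mu, a lam ≠ 0 → a mu ≠ 0 → a lam * a mu = a (lam + mu) := by
  classical
  have hι0 : ∀ {x : A}, x ≠ 0 → algebraMap A F x ≠ 0 := fun hx =>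
    (map_ne_zero_iff _ hι).mpr hx
  -- rank ≤ 1 consequence
  have hsmul : ∀ (mu : Λ) (x z : A), x ∈ 𝒜 mu → z ∈ 𝒜 mu → z ≠ 0 → ∃ k : K, x = k • z := by
    intro mu x z hx hz hz0
    obtain ⟨v₀, hv₀⟩ := rank_le_one_iff.mp (hmf mu)
    obtain ⟨r, hr⟩ := hv₀ ⟨x, hx⟩
    obtain ⟨r', hr'⟩ := hv₀ ⟨z, hz⟩
    have hr'0 : r' ≠ 0 := by
      rintro rfl
      rw [zero_smul] at hr'
      exact hz0 (by simpa using congrArg Subtype.val hr'.symm)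
    refine ⟨r / r', ?_⟩
    have : (⟨x, hx⟩ : 𝒜 mu) = (r / r') • (⟨z, hz⟩ : 𝒜 mu) := by
      rw [← hr, ← hr', smul_smul, div_mul_cancel₀ _ hr'0]
    simpa using congrArg Subtype.val this
  -- the group of homogeneous fractions
  let H : AddSubgroup (Additive Fˣ × Λ) :=
  { carrier := {p | ∃ (mu nu : Λ) (x y : A), x ∈ 𝒜 mu ∧ y ∈ 𝒜 nu ∧ x ≠ 0 ∧ y ≠ 0 ∧
      ((Additive.toMul p.1 : Fˣ) : F) * algebraMap A F y = algebraMap A F x ∧ p.2 = mu - nu}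
    zero_mem' := ⟨0, 0, 1, 1, SetLike.one_mem_graded _, SetLike.one_mem_graded _,
      one_ne_zero, one_ne_zero, by simp, by simp⟩
    add_mem' := by
      rintro p q ⟨mu, nu, x, y, hx, hy, hx0, hy0, heq, hdeg⟩
        ⟨mu', nu', x', y', hx', hy', hx0', hy0', heq', hdeg'⟩
      refine ⟨mu + mu', nu + nu', x * x', y * y', SetLike.mul_mem_graded hx hx',
        SetLike.mul_mem_graded hy hy', mul_ne_zero hx0 hx0', mul_ne_zero hy0 hy0', ?_, ?_⟩
      · have h1 : (p + q).1 = p.1 + q.1 := rfl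
        rw [h1, toMul_add, Units.val_mul, map_mul, map_mul]
        calc ((Additive.toMul p.1 : Fˣ) : F) * (Additive.toMul q.1 : Fˣ) *
              (algebraMap A F y * algebraMap A F y')
            = (((Additive.toMul p.1 : Fˣ) : F) * algebraMap A F y) *
              (((Additive.toMul q.1 : Fˣ) : F) * algebraMap A F y') := by ring
          _ = algebraMap A F x * algebraMap A F x' := by rw [heq, heq']
      · have h2 : (p + q).2 = p.2 + q.2 := rfl
        rw [h2, hdeg, hdeg']; abel
    neg_mem' := by
      rintro p ⟨mu, nu, x, y, hx, hy, hx0, hy0, heq, hdeg⟩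
      refine ⟨nu, mu, y, x, hy, hx, hy0, hx0, ?_, ?_⟩
      · have h1 : (-p).1 = -p.1 := rfl
        rw [h1, toMul_neg, Units.val_inv_eq_inv_val]
        rw [← heq]
        exact inv_mul_cancel_left₀ (Units.ne_zero _) _
      · have h2 : (-p).2 = -p.2 := rfl
        rw [h2, hdeg, neg_sub]
    }
  let φ : H →ₗ[ℤ] Λ := ((AddMonoidHom.snd (Additive Fˣ) Λ).comp H.subtype).toIntLinearMap
  obtain ⟨s, hs⟩ := Module.projective_lifting_property φ.rangeRestrict
    (LinearMap.id : LinearMap.range φ →ₗ[ℤ] LinearMap.range φ)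
    (LinearMap.surjective_rangeRestrict φ)
  have hs' : ∀ z : LinearMap.range φ, φ (s z) = (z : Λ) := by
    intro z
    have h1 : φ.rangeRestrict (s z) = z := by
      have := LinearMap.ext_iff.mp hs z
      exact this
    simpa using congrArg Subtype.val h1
  have hmem : ∀ lam : Λ, 𝒜 lam ≠ ⊥ → lam ∈ LinearMap.range φ := by
    intro lam h
    obtain ⟨x, hx, hx0⟩ := Submodule.exists_mem_ne_zero_of_ne_bot h
    have hH : ((Additive.ofMul (Units.mk0 (algebraMap A F x) (hι0 hx0)), lam)
        : Additive Fˣ × Λ) ∈ H :=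
      ⟨lam, 0, x, 1, hx, SetLike.one_mem_graded _, hx0, one_ne_zero, by simp, by simp⟩
    exact ⟨⟨_, hH⟩, rfl⟩
  -- extraction
  have key : ∀ (lam : Λ) (h : 𝒜 lam ≠ ⊥), ∃ c : A, c ∈ 𝒜 lam ∧
      algebraMap A F c
        = ((Additive.toMul ((s ⟨lam, hmem lam h⟩ : H) : Additive Fˣ × Λ).1 : Fˣ) : F) := by
    intro lam h
    obtain ⟨z, hz, hz0⟩ := Submodule.exists_mem_ne_zero_of_ne_bot h
    have hp2 : ((s ⟨lam, hmem lam h⟩ : H) : Additive Fˣ × Λ).2 = lam := hs' _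
    obtain ⟨mu, nu, x, y, hx, hy, hx0, hy0, heq, hdeg⟩ := (s ⟨lam, hmem lam h⟩).2
    rw [hp2] at hdeg
    have hμ : lam + nu = mu := by rw [hdeg]; abel
    have hzy : z * y ∈ 𝒜 mu := hμ ▸ SetLike.mul_mem_graded hz hy
    obtain ⟨k, hk⟩ := hsmul mu x (z * y) hx hzy (mul_ne_zero hz0 hy0)
    refine ⟨k • z, Submodule.smul_mem _ _ hz, ?_⟩
    have h2 : algebraMap A F (k • z) * algebraMap A F y
        = ((Additive.toMul ((s ⟨lam, hmem lam h⟩ : H) : Additive Fˣ × Λ).1 : Fˣ) : F)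
          * algebraMap A F y := by
      rw [← map_mul, smul_mul_assoc, ← hk, ← heq]
    exact mul_right_cancel₀ (hι0 hy0) h2
  choose c hc1 hc2 using key
  let a : Λ → A := fun lam => if h : 𝒜 lam ≠ ⊥ then c lam h else 0
  have ha_val : ∀ (lam : Λ) (h : 𝒜 lam ≠ ⊥), a lam = c lam h := fun lam h => dif_pos h
  have ha_mem : ∀ (lam : Λ) (h : 𝒜 lam ≠ ⊥), a lam ∈ 𝒜 lam := fun lam h =>
    (ha_val lam h) ▸ hc1 lam h
  have ha_ne : ∀ (lam : Λ) (h : 𝒜 lam ≠ ⊥), a lam ≠ 0 := by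
    intro lam h h0
    have := hc2 lam h
    rw [← ha_val lam h, h0, map_zero] at this
    exact Units.ne_zero _ this.symm
  have h0 : 𝒜 0 ≠ ⊥ := by
    intro hb
    have h1 : (1 : A) ∈ 𝒜 0 := SetLike.one_mem_graded _
    rw [hb] at h1
    exact one_ne_zero ((Submodule.mem_bot K).mp h1)
  refine ⟨a, ?_, ?_, ?_⟩
  · -- a 0 = 1
    apply hι
    rw [ha_val 0 h0, hc2 0 h0, map_one]
    have hz : (⟨(0 : Λ), hmem 0 h0⟩ : LinearMap.range φ) = 0 := by ext; rfl
    rw [hz, map_zero]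
    rfl
  · -- spans
    intro lam
    by_cases h : 𝒜 lam ≠ ⊥
    · refine le_antisymm ?_ (Submodule.span_le.mpr (by simpa using ha_mem lam h))
      intro w hw
      obtain ⟨k, hk⟩ := hsmul lam w (a lam) hw (ha_mem lam h) (ha_ne lam h)
      rw [hk]
      exact Submodule.smul_mem _ _ (Submodule.mem_span_singleton_self _)
    · rw [not_not] at h
      have : a lam = 0 := dif_neg (by rw [h]; simp)
      rw [h, this, Submodule.span_zero_singleton]
  · -- multiplicative
    intro lam mu hla hmu
    have hAl : 𝒜 lam ≠ ⊥ := by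
      intro hb; exact hla (dif_neg (by rw [hb]; simp))
    have hAm : 𝒜 mu ≠ ⊥ := by
      intro hb; exact hmu (dif_neg (by rw [hb]; simp))
    have hprod : a lam * a mu ∈ 𝒜 (lam + mu) :=
      SetLike.mul_mem_graded (ha_mem lam hAl) (ha_mem mu hAm)
    have hne : a lam * a mu ≠ 0 := mul_ne_zero hla hmu
    have hsum : 𝒜 (lam + mu) ≠ ⊥ := by
      intro hb; rw [hb] at hprod; exact hne ((Submodule.mem_bot K).mp hprod)
    apply hι
    rw [map_mul, ha_val lam hAl, ha_val mu hAm, ha_val _ hsum,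
      hc2 lam hAl, hc2 mu hAm, hc2 _ hsum]
    have hadd : (⟨lam, hmem lam hAl⟩ : LinearMap.range φ) + ⟨mu, hmem mu hAm⟩
        = ⟨lam + mu, hmem _ hsum⟩ := by ext; rfl
    rw [← hadd, map_add]
    have h1 : ((s ⟨lam, hmem lam hAl⟩ + s ⟨mu, hmem mu hAm⟩ : H) : Additive Fˣ × Λ).1
        = ((s ⟨lam, hmem lam hAl⟩ : H) : Additive Fˣ × Λ).1
          + ((s ⟨mu, hmem mu hAm⟩ : H) : Additive Fˣ × Λ).1 := rfl
    rw [h1, toMul_add, Units.val_mul]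

/-- Let `K` be an algebraically closed field of characteristic 0, `Λ` a
finitely generated free abelian group, and `A`, `B` two `Λ`-graded commutative integral
`K`-algebras whose gradings are multiplicity free (every graded piece has dimension ≤ 1).
If the support monoids coincide, `{λ | 𝒜 λ ≠ 0} = {λ | ℬ λ ≠ 0}`, then `A` and `B` are
isomorphic as `Λ`-graded `K`-algebras: there is a `K`-algebra isomorphism `A ≃ B`
mapping each `𝒜 λ` onto `ℬ λ`. -/
theorem graded_multiplicityFree_domains_iso_of_eq_support
    (K Λ A B : Type*) [Field K] [IsAlgClosed K] [CharZero K]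
    [AddCommGroup Λ] [DecidableEq Λ] [Module.Free ℤ Λ] [Module.Finite ℤ Λ]
    [CommRing A] [IsDomain A] [Algebra K A]
    [CommRing B] [IsDomain B] [Algebra K B]
    (𝒜 : Λ → Submodule K A) [GradedAlgebra 𝒜]
    (ℬ : Λ → Submodule K B) [GradedAlgebra ℬ]
    (hmfA : ∀ lam : Λ, Module.rank K (𝒜 lam) ≤ 1)
    (hmfB : ∀ lam : Λ, Module.rank K (ℬ lam) ≤ 1)
    (hsupp : {lam : Λ | 𝒜 lam ≠ ⊥} = {lam : Λ | ℬ lam ≠ ⊥}) :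
    ∃ e : A ≃ₐ[K] B, ∀ lam : Λ, (𝒜 lam).map e.toLinearMap = ℬ lam := by
  classical
  obtain ⟨a, ha0, haspan, hamul⟩ :=
    exists_mult_basis 𝒜 hmfA (FractionRing A) (IsFractionRing.injective A _)
  obtain ⟨b, hb0, hbspan, hbmul⟩ :=
    exists_mult_basis ℬ hmfB (FractionRing B) (IsFractionRing.injective B _)
  have hne : ∀ lam, a lam ≠ 0 ↔ b lam ≠ 0 := by
    intro lam
    have h1 : a lam ≠ 0 ↔ 𝒜 lam ≠ ⊥ := by
      rw [haspan lam]; exact (not_congr Submodule.span_singleton_eq_bot).symm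
    have h2 : b lam ≠ 0 ↔ ℬ lam ≠ ⊥ := by
      rw [hbspan lam]; exact (not_congr Submodule.span_singleton_eq_bot).symm
    rw [h1, h2]
    exact Set.ext_iff.mp hsupp lam
  have hamem : ∀ lam, a lam ∈ 𝒜 lam := by
    intro lam; rw [haspan lam]; exact Submodule.mem_span_singleton_self _
  have hbmem : ∀ lam, b lam ∈ ℬ lam := by
    intro lam; rw [hbspan lam]; exact Submodule.mem_span_singleton_self _
  -- bottom equiv
  let eb : (⊥ : Submodule K A) ≃ₗ[K] (⊥ : Submodule K B) :=
  { toFun := fun _ => 0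
    invFun := fun _ => 0
    map_add' := by intros; simp
    map_smul' := by intros; simp
    left_inv := fun x => Subsingleton.elim _ _
    right_inv := fun x => Subsingleton.elim _ _ }
  let e : ∀ lam, (𝒜 lam) ≃ₗ[K] (ℬ lam) := fun lam =>
    if h : a lam ≠ 0 then
      (LinearEquiv.ofEq _ _ (haspan lam)).trans
        (((LinearEquiv.toSpanNonzeroSingleton K A (a lam) h).symm.trans
          (LinearEquiv.toSpanNonzeroSingleton K B (b lam) ((hne lam).mp h))).trans
          (LinearEquiv.ofEq _ _ (hbspan lam).symm))
    else
      (LinearEquiv.ofEq (𝒜 lam) ⊥ (show 𝒜 lam = ⊥ by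
        rw [haspan lam, not_not.mp h, Submodule.span_zero_singleton])).trans
        (eb.trans (LinearEquiv.ofEq ⊥ (ℬ lam) ((show ℬ lam = ⊥ by
          rw [hbspan lam, show b lam = 0 from not_not.mp (fun hb => (h ((hne lam).mpr hb))),
            Submodule.span_zero_singleton]).symm)))
  have hea : ∀ (lam : Λ) (h : a lam ≠ 0), ((e lam ⟨a lam, hamem lam⟩ : ℬ lam) : B) = b lam := by
    intro lam h
    simp only [e, dif_pos h, LinearEquiv.trans_apply, LinearEquiv.coe_ofEq_apply]
    have h1 : (LinearEquiv.toSpanNonzeroSingleton K A (a lam) h).symm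
        ((LinearEquiv.ofEq _ _ (haspan lam)) ⟨a lam, hamem lam⟩) = 1 := by
      rw [LinearEquiv.symm_apply_eq, LinearEquiv.toSpanNonzeroSingleton_one]
      ext
      simp
    rw [h1, LinearEquiv.toSpanNonzeroSingleton_one]
  let f : A ≃ₗ[K] B := (DirectSum.decomposeLinearEquiv 𝒜).trans
    ((DFinsupp.mapRange.linearEquiv e).trans (DirectSum.decomposeLinearEquiv ℬ).symm)
  have hfval : ∀ (lam : Λ) (x : A) (hx : x ∈ 𝒜 lam), f x = ((e lam ⟨x, hx⟩ : ℬ lam) : B) := by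
    intro lam x hx
    show (DirectSum.decomposeLinearEquiv ℬ).symm
      ((DFinsupp.mapRange.linearEquiv e) ((DirectSum.decomposeLinearEquiv 𝒜) x)) = _
    rw [DirectSum.decomposeLinearEquiv_apply, DirectSum.decompose_of_mem 𝒜 hx]
    have h1 : (DFinsupp.mapRange.linearEquiv e)
        ((DirectSum.of (fun i => ↥(𝒜 i)) lam) ⟨x, hx⟩)
        = (DirectSum.of (fun i => ↥(ℬ i)) lam) (e lam ⟨x, hx⟩) := by
      show DFinsupp.mapRange (fun i (x : 𝒜 i) => e i x) (fun i => (e i).map_zero)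
        (DFinsupp.single lam ⟨x, hx⟩) = DFinsupp.single lam (e lam ⟨x, hx⟩)
      rw [DFinsupp.mapRange_single]
    rw [h1, DirectSum.decomposeLinearEquiv_symm_apply, DirectSum.decompose_symm_of]
  have hfa : ∀ lam, f (a lam) = b lam := by
    intro lam
    by_cases h : a lam ≠ 0
    · rw [hfval lam (a lam) (hamem lam), hea lam h]
    · rw [not_not.mp h, map_zero,
        show b lam = 0 from not_not.mp (fun hb => (h ((hne lam).mpr hb)))]
  have hsmulA : ∀ (lam : Λ) (x : A), x ∈ 𝒜 lam → ∃ k : K, x = k • a lam := by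
    intro lam x hx
    rw [haspan lam] at hx
    obtain ⟨k, hk⟩ := Submodule.mem_span_singleton.mp hx
    exact ⟨k, hk.symm⟩
  have hmul : ∀ x y : A, f (x * y) = f x * f y := by
    have key : ∀ (lam mu : Λ) (x y : A), x ∈ 𝒜 lam → y ∈ 𝒜 mu →
        f (x * y) = f x * f y := by
      intro lam mu x y hx hy
      obtain ⟨k, hk⟩ := hsmulA lam x hx
      obtain ⟨l, hl⟩ := hsmulA mu y hy
      subst hk hl
      by_cases ha : a lam = 0
      · simp [ha]
      by_cases hb : a mu = 0
      · simp [hb]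
      rw [smul_mul_smul_comm, hamul lam mu ha hb, map_smul, map_smul, map_smul,
        hfa, hfa, hfa, smul_mul_smul_comm,
        hbmul lam mu ((hne lam).mp ha) ((hne mu).mp hb)]
    intro x y
    induction x using DirectSum.Decomposition.inductionOn 𝒜 generalizing y with
    | zero => simp
    | homogeneous m =>
      induction y using DirectSum.Decomposition.inductionOn 𝒜 with
      | zero => simp
      | homogeneous m' => exact key _ _ _ _ m.2 m'.2
      | add y y' hy hy' => rw [mul_add, map_add, hy, hy', map_add, mul_add]
    | add x x' hx hx' => rw [add_mul, map_add, hx y, hx' y, map_add, add_mul]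
  have hone : f 1 = 1 := by rw [← ha0, hfa, hb0]
  refine ⟨AlgEquiv.ofLinearEquiv f hone hmul, ?_⟩
  intro lam
  have hcoe : ∀ x : A, (AlgEquiv.ofLinearEquiv f hone hmul).toLinearMap x = f x := fun _ => rfl
  rw [haspan lam, hbspan lam, Submodule.map_span, Set.image_singleton, hcoe, hfa]
end

section
/- Let R be a commutative integral domain and let I be a nonzero ideal of R which is invertible, i.e. I is a unit when regarded as a fractional ideal of R in its field of fractions. Then the open subset of the prime spectrum Spec R given by the complement of the zero locus of I (that is, { p ∈ Spec R : I ⊄ p }) is an affine open subset of the scheme Spec R. -/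
open AlgebraicGeometry CategoryTheory Opposite TopologicalSpace

section LocAux

variable {R : Type} [CommRing R]

/-- Auxiliary localization computation. -/
lemma loc_mul_alg_eq (p : Ideal R) [p.IsPrime] (a₁ a₂ s₁ s₂ : R) (h₁ : s₁ ∈ p.primeCompl)
    (h : a₁ * s₂ = a₂ * s₁) :
    Localization.mk a₁ ⟨s₁, h₁⟩ * algebraMap R (Localization.AtPrime p) s₂
      = algebraMap R (Localization.AtPrime p) a₂ := by
  rw [← Localization.mk_one_eq_algebraMap, ← Localization.mk_one_eq_algebraMap,
    Localization.mk_mul, Localization.mk_eq_mk_iff, Localization.r_iff_exists]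
  refine ⟨1, ?_⟩
  simp only [OneMemClass.coe_one, one_mul, Submonoid.coe_mul, OneMemClass.coe_one, mul_one]
  rw [h]
  ring

/-- Auxiliary localization computation: writing `1` as a combination. -/
lemma loc_one_eq_sum (p : Ideal R) [p.IsPrime] {n : ℕ}
    (rr cc : Fin n → R) (s : R) (hs : s ∈ p.primeCompl) (hsum : ∑ i, rr i * cc i = s) :
    (1 : Localization.AtPrime p)
      = ∑ i, algebraMap R (Localization.AtPrime p) (rr i) * Localization.mk (cc i) ⟨s, hs⟩ := by
  have hu : IsUnit (algebraMap R (Localization.AtPrime p) s) :=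
    IsLocalization.map_units _ (⟨s, hs⟩ : p.primeCompl)
  apply hu.mul_left_cancel
  rw [mul_one, Finset.mul_sum]
  have hterm : ∀ i, algebraMap R (Localization.AtPrime p) s *
      (algebraMap R (Localization.AtPrime p) (rr i) * Localization.mk (cc i) ⟨s, hs⟩)
      = algebraMap R (Localization.AtPrime p) (rr i * cc i) := by
    intro i
    calc algebraMap R (Localization.AtPrime p) s *
          (algebraMap R (Localization.AtPrime p) (rr i) * Localization.mk (cc i) ⟨s, hs⟩)
        = algebraMap R (Localization.AtPrime p) (rr i) *
            (Localization.mk (cc i) ⟨s, hs⟩ * algebraMap R (Localization.AtPrime p) s) := by ring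
      _ = algebraMap R (Localization.AtPrime p) (rr i) *
            algebraMap R (Localization.AtPrime p) (cc i) := by
          rw [loc_mul_alg_eq p (cc i) (cc i) s s hs rfl]
      _ = algebraMap R (Localization.AtPrime p) (rr i * cc i) := by rw [map_mul]
  rw [Finset.sum_congr rfl fun i _ => hterm i, ← map_sum, hsum]

end LocAux

section Aux

variable {R : Type} [CommRing R] [IsDomain R]

/-- Finite representation of `1` as a sum `∑ aᵢ bᵢ` with `aᵢ ∈ I` and `bᵢ ∈ I⁻¹`. -/
lemma exists_finite_rep_of_invertible (I : Ideal R)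
    (hinv : IsUnit (I : FractionalIdeal (nonZeroDivisors R) (FractionRing R))) :
    ∃ (n : ℕ) (r : Fin n → R) (b : Fin n → FractionRing R),
      (∀ i, r i ∈ I) ∧
      (∀ i, b i ∈ (I : FractionalIdeal (nonZeroDivisors R) (FractionRing R))⁻¹) ∧
      (1 : FractionRing R) = ∑ i, algebraMap R (FractionRing R) (r i) * b i := by
  have hmul : (I : FractionalIdeal (nonZeroDivisors R) (FractionRing R)) *
      (I : FractionalIdeal (nonZeroDivisors R) (FractionRing R))⁻¹ = 1 :=
    (FractionalIdeal.mul_inv_cancel_iff_isUnit _).mpr hinv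
  have h1 : (1 : FractionRing R) ∈ (I : FractionalIdeal (nonZeroDivisors R) (FractionRing R)) *
      (I : FractionalIdeal (nonZeroDivisors R) (FractionRing R))⁻¹ := by
    rw [hmul]; exact FractionalIdeal.one_mem_one _
  have key : ∀ x : FractionRing R,
      x ∈ (I : FractionalIdeal (nonZeroDivisors R) (FractionRing R)) *
        (I : FractionalIdeal (nonZeroDivisors R) (FractionRing R))⁻¹ →
      ∃ (n : ℕ) (r : Fin n → R) (b : Fin n → FractionRing R),
        (∀ i, r i ∈ I) ∧
        (∀ i, b i ∈ (I : FractionalIdeal (nonZeroDivisors R) (FractionRing R))⁻¹) ∧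
        x = ∑ i, algebraMap R (FractionRing R) (r i) * b i := by
    intro x hx
    refine FractionalIdeal.mul_induction_on hx ?_ ?_
    · intro m hm y hy
      obtain ⟨rm, hrm, rfl⟩ := (FractionalIdeal.mem_coeIdeal _).mp hm
      exact ⟨1, fun _ => rm, fun _ => y, fun _ => hrm, fun _ => hy, by simp⟩
    · rintro x y ⟨n₁, r₁, b₁, hr₁, hb₁, rfl⟩ ⟨n₂, r₂, b₂, hr₂, hb₂, rfl⟩
      refine ⟨n₁ + n₂, Fin.append r₁ r₂, Fin.append b₁ b₂, ?_, ?_, ?_⟩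
      · intro i
        refine Fin.addCases (fun j => ?_) (fun j => ?_) i <;>
          simp [Fin.append_left, Fin.append_right, hr₁, hr₂]
      · intro i
        refine Fin.addCases (fun j => ?_) (fun j => ?_) i <;>
          simp [Fin.append_left, Fin.append_right, hb₁, hb₂]
      · rw [Fin.sum_univ_add]
        simp [Fin.append_left, Fin.append_right]
  exact key 1 h1

set_option maxHeartbeats 1000000 in
set_option synthInstance.maxHeartbeats 400000 in
/-- The main auxiliary lemma: any open of `Spec R` whose points are exactly the primes not
containing a nonzero invertible ideal `I` is affine. -/
lemma isAffineOpen_aux (I : Ideal R) (hI0 : I ≠ 0)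
    (hinv : IsUnit (I : FractionalIdeal (nonZeroDivisors R) (FractionRing R)))
    (V : (Spec (CommRingCat.of R)).Opens)
    (hV : ∀ p : PrimeSpectrum R, p ∈ V ↔ ¬ I ≤ p.asIdeal) :
    IsAffineOpen V := by
  classical
  obtain ⟨n, r, b, hr, hb, hsum⟩ := exists_finite_rep_of_invertible I hinv
  have hKinj : Function.Injective (algebraMap R (FractionRing R)) :=
    IsFractionRing.injective R (FractionRing R)
  have hIne : (I : FractionalIdeal (nonZeroDivisors R) (FractionRing R)) ≠ 0 :=
    FractionalIdeal.coeIdeal_ne_zero.mpr hI0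
  -- for each `i` and each `x ∈ I`, `b i * x` comes from `R`
  have hbx : ∀ (i : Fin n) (x : R), x ∈ I →
      ∃ d : R, algebraMap R (FractionRing R) d = b i * algebraMap R (FractionRing R) x := by
    intro i x hx
    exact (FractionalIdeal.mem_one_iff _).mp
      ((FractionalIdeal.mem_inv_iff hIne).mp (hb i) (algebraMap R (FractionRing R) x)
        (FractionalIdeal.mem_coeIdeal_of_mem _ hx))
  -- choose `c i k : R` with `algebraMap (c i k) = b i * algebraMap (r k)`
  choose c hc using fun i k => hbx i (r k) (hr k)
  have hkey : ∀ i k m, c i k * r m = c i m * r k := by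
    intro i k m
    apply hKinj
    rw [map_mul, map_mul, hc, hc]
    ring
  -- the covering property
  have hcov : ∀ p : PrimeSpectrum R, ¬ I ≤ p.asIdeal → ∃ i, r i ∉ p.asIdeal := by
    intro p hp
    by_contra hcon
    push_neg at hcon
    apply hp
    intro x hx
    choose d hd using fun i => hbx i x hx
    have hxK : algebraMap R (FractionRing R) x
        = algebraMap R (FractionRing R) (∑ i, r i * d i) := by
      rw [map_sum]
      calc algebraMap R (FractionRing R) x
          = (∑ i, algebraMap R (FractionRing R) (r i) * b i)
            * algebraMap R (FractionRing R) x := by rw [← hsum, one_mul]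
        _ = ∑ i, algebraMap R (FractionRing R) (r i)
              * (b i * algebraMap R (FractionRing R) x) := by
            rw [Finset.sum_mul]; exact Finset.sum_congr rfl fun i _ => by ring
        _ = ∑ i, algebraMap R (FractionRing R) (r i * d i) := by
            refine Finset.sum_congr rfl fun i _ => ?_
            rw [map_mul, hd i]
    rw [hKinj hxK]
    exact Ideal.sum_mem _ fun i _ => p.asIdeal.mul_mem_right _ (hcon i)
  -- choice of an index for each point of `V`
  have hsel : ∀ x : V, ∃ i, r i ∉ x.1.asIdeal := fun x => hcov x.1 ((hV x.1).mp x.2)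
  choose j hj using hsel
  -- the sections corresponding to the `bᵢ` over `V`
  have hF : ∀ i : Fin n, (StructureSheaf.isLocallyFraction R R).pred
      (fun x : V => (LocalizedModule.mk (c i (j x)) ⟨r (j x), hj x⟩ :
        StructureSheaf.Localizations (R := R) R x.1)) := by
    intro i x
    refine ⟨V ⊓ PrimeSpectrum.basicOpen (r (j x)), ⟨x.2, hj x⟩, homOfLE inf_le_left,
      c i (j x), r (j x), ?_⟩
    rintro ⟨y, hyV, hyB⟩
    refine ⟨hyB, ?_⟩
    refine LocalizedModule.mk_eq.mpr ⟨1, ?_⟩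
    simp only [one_smul, Submonoid.smul_def, smul_eq_mul]
    change r (j x) * c i (j ⟨y, hyV⟩) = r (j ⟨y, hyV⟩) * c i (j x)
    linear_combination hkey i (j ⟨y, hyV⟩) (j x)
  let Csec : Fin n → Γ(Spec (CommRingCat.of R), V) := fun i => ⟨_, hF i⟩
  -- the images of the `r i` in `Γ(Spec R, V)`
  let a : Fin n → Γ(Spec (CommRingCat.of R), V) := fun i => StructureSheaf.toOpen R V (r i)
  -- `1 = ∑ aᵢ ⬝ bᵢ` as sections over `V`
  have hone : (1 : Γ(Spec (CommRingCat.of R), V)) = ∑ i, a i * Csec i := by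
    refine Subtype.ext (funext fun x => ?_)
    have hsR : ∑ i, r i * c i (j x) = r (j x) := by
      apply hKinj
      rw [map_sum]
      calc ∑ i, algebraMap R (FractionRing R) (r i * c i (j x))
          = ∑ i, algebraMap R (FractionRing R) (r i)
              * (b i * algebraMap R (FractionRing R) (r (j x))) := by
            refine Finset.sum_congr rfl fun i _ => ?_
            rw [map_mul, hc]
        _ = (∑ i, algebraMap R (FractionRing R) (r i) * b i)
              * algebraMap R (FractionRing R) (r (j x)) := by
            rw [Finset.sum_mul]; exact Finset.sum_congr rfl fun i _ => by ring
        _ = algebraMap R (FractionRing R) (r (j x)) := by rw [← hsum, one_mul]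
    let q : PrimeSpectrum R := x.1
    let ev : Γ(Spec (CommRingCat.of R), V) →+* StructureSheaf.Localizations (R := R) R q :=
      (Pi.evalRingHom _ x).comp (StructureSheaf.sectionsSubalgebra R V).val.toRingHom
    show (1 : StructureSheaf.Localizations (R := R) R q) = ev (∑ i, a i * Csec i)
    rw [map_sum]
    have hterm : ∀ i, ev (a i * Csec i)
        = algebraMap R (StructureSheaf.Localizations (R := R) R q) (r i)
            * LocalizedModule.mk (c i (j x)) ⟨r (j x), hj x⟩ := fun i => rfl
    rw [Finset.sum_congr rfl fun i _ => hterm i]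
    have hmk : ∀ (m : R) (t : q.asIdeal.primeCompl), (LocalizedModule.mk m t :
        StructureSheaf.Localizations (R := R) R q)
        = algebraMap R _ m * LocalizedModule.mk 1 t := by
      intro m t
      rw [Algebra.algebraMap_eq_smul_one, smul_mul_assoc, one_mul, LocalizedModule.smul'_mk,
        smul_eq_mul, mul_one]
    have hterm2 : ∀ i, algebraMap R (StructureSheaf.Localizations (R := R) R q) (r i)
          * LocalizedModule.mk (c i (j x)) ⟨r (j x), hj x⟩
        = algebraMap R (StructureSheaf.Localizations (R := R) R q) (r i * c i (j x))
          * LocalizedModule.mk 1 ⟨r (j x), hj x⟩ := fun i => by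
      rw [hmk (c i (j x)), ← mul_assoc, ← map_mul]
    rw [Finset.sum_congr rfl fun i _ => hterm2 i, ← Finset.sum_mul, ← map_sum, hsR, ← hmk]
    rw [OreLocalization.one_def]
    exact (LocalizedModule.mk_eq.mpr ⟨1, by simp [Submonoid.smul_def]⟩ :
      (LocalizedModule.mk (r (j x)) ⟨r (j x), hj x⟩ : StructureSheaf.Localizations (R := R) R q)
        = LocalizedModule.mk 1 1).symm
  refine isAffineOpen_of_isAffineOpen_basicOpen V (Set.range a) ?_ ?_
  · rw [Ideal.eq_top_iff_one, hone]
    exact Ideal.sum_mem _ fun i _ => Ideal.mul_mem_right _ _ (Ideal.subset_span ⟨i, rfl⟩)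
  · rintro u ⟨i, rfl⟩
    have h1 : a i = (Spec (CommRingCat.of R)).presheaf.map (homOfLE le_top).op
        ((Scheme.ΓSpecIso (CommRingCat.of R)).inv (r i)) := rfl
    have heq : (Spec (CommRingCat.of R)).basicOpen (a i) = PrimeSpectrum.basicOpen (r i) := by
      have h2 : (Spec (CommRingCat.of R)).basicOpen
          ((Scheme.ΓSpecIso (CommRingCat.of R)).inv (r i)) = PrimeSpectrum.basicOpen (r i) :=
        basicOpen_eq_of_affine _
      rw [h1, Scheme.basicOpen_res, h2]
      refine inf_eq_right.mpr ?_
      intro p hp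
      exact (hV p).mpr fun hle => hp (hle (hr i))
    rw [heq]
    exact IsAffineOpen.Spec_basicOpen _

end Aux

/-- If `R` is a commutative integral domain and `I` is a nonzero invertible
ideal of `R` (a unit as a fractional ideal of `R` in its fraction field), then the open
subset of `Spec R` complementary to the zero locus of `I` is an affine open subset. -/
theorem isAffineOpen_compl_zeroLocus_of_invertible
    (R : Type) [CommRing R] [IsDomain R] (I : Ideal R) (hI0 : I ≠ 0)
    (hinv : IsUnit (I : FractionalIdeal (nonZeroDivisors R) (FractionRing R))) :
    IsAffineOpen (X := Spec (CommRingCat.of R))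
      ⟨{p : PrimeSpectrum R | ¬ I ≤ p.asIdeal}, by
        have h : {p : PrimeSpectrum R | ¬ I ≤ p.asIdeal}
            = (PrimeSpectrum.zeroLocus (I : Set R))ᶜ := by
          ext p
          simp [PrimeSpectrum.mem_zeroLocus, SetLike.coe_subset_coe]
        have h2 : IsOpen {p : PrimeSpectrum R | ¬ I ≤ p.asIdeal} := by
          rw [h]
          exact (PrimeSpectrum.isClosed_zeroLocus _).isOpen_compl
        exact h2⟩ := by
  exact isAffineOpen_aux I hI0 hinv _ (fun p => Iff.rfl)
end
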